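/- arXiv:1205.3906 — 4 statements merged into one kernel-verified Lean document; each statement's English description precedes it below -/
import Mathlib

section
/- Fix n ≥ 1, and for i = 1,…,n fix y_i ∈ ℝ^{n_i} and a real n_i×r matrix X_i; let σ² > 0 and let D be a symmetric positive definite r×r matrix. Set W_i := ((1/σ²)·X_iᵀX_i + D^{−1})^{−1} D^{−1} for each i, and assume the matrix M := ∑_{i=1}^n { (I − W_i)ᵀ D^{−1} (I − W_i) + (1/σ²)·W_iᵀ X_iᵀ X_i W_i } is invertible. Define one cycle of the coordinate updates as the map taking current values (m_1,…,m_n) ∈ (ℝ^r)^n of the variational means μ^q_{α̃_i} to: Σ^q_β := M^{−1}; μ^q_β := Σ^q_β ∑_{i=1}^n [ (1/σ²)·W_iᵀ X_iᵀ y_i + { D^{−1}(I − W_i) − (1/σ²)·X_iᵀX_iW_i }ᵀ m_i ]; then for each i, Σ^q_{α̃_i} := (D^{−1} + (1/σ²)·X_iᵀX_i)^{−1} and μ^q_{α̃_i} := Σ^q_{α̃_i} [ (1/σ²)·X_iᵀ y_i + { D^{−1}(I − W_i) − (1/σ²)·X_iᵀX_iW_i } μ^q_β ]. Then for each i one has D^{−1}(I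 − W_i) − (1/σ²)·X_iᵀX_iW_i = 0, so the output of one cycle does not depend on the input (m_1,…,m_n): μ^q_β = M^{−1} ∑_{i=1}^n (1/σ²)·W_iᵀ X_iᵀ y_i and μ^q_{α̃_i} = (D^{−1} + (1/σ²)·X_iᵀX_i)^{−1} (1/σ²)·X_iᵀ y_i for every input; consequently the iterative scheme converges after a single cycle (the values produced by one cycle form a fixed point of the cycle map). -/
open Matrix

/-- **Algorithm 1 converges in a single cycle under the optimal tuning matrices.**
With `W_i = ((1/σ²) X_iᵀX_i + D⁻¹)⁻¹ D⁻¹`, the cross-coupling coefficients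
`D⁻¹(I - W_i) - (1/σ²) X_iᵀX_i W_i` vanish, so the output of one cycle of the coordinate
updates of Algorithm 1 does not depend on the input means `(m_1, …, m_n)`, and the values
produced by one cycle form a fixed point of the cycle map. -/
theorem algorithm1_one_cycle_convergence
    {n r : ℕ} (ni : Fin n → ℕ) (hn : 1 ≤ n)
    (y : (i : Fin n) → Fin (ni i) → ℝ)
    (X : (i : Fin n) → Matrix (Fin (ni i)) (Fin r) ℝ)
    (σ2 : ℝ) (hσ2 : 0 < σ2)
    (D : Matrix (Fin r) (Fin r) ℝ) (hD : D.PosDef)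
    (W : Fin n → Matrix (Fin r) (Fin r) ℝ)
    (hW : ∀ i, W i = ((1 / σ2) • ((X i)ᵀ * X i) + D⁻¹)⁻¹ * D⁻¹)
    (M : Matrix (Fin r) (Fin r) ℝ)
    (hM : M = ∑ i, ((1 - W i)ᵀ * D⁻¹ * (1 - W i) + (1 / σ2) • ((W i)ᵀ * (X i)ᵀ * X i * W i)))
    (hMinv : IsUnit M.det)
    -- the fixed-effect mean produced by one cycle, as a function of the input means
    (μβ : (Fin n → Fin r → ℝ) → Fin r → ℝ)
    (hμβ : ∀ m : Fin n → Fin r → ℝ,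
      μβ m = M⁻¹ *ᵥ ∑ i, ((1 / σ2) • ((W i)ᵀ *ᵥ ((X i)ᵀ *ᵥ y i)) +
        (D⁻¹ * (1 - W i) - (1 / σ2) • ((X i)ᵀ * X i * W i))ᵀ *ᵥ m i))
    -- the random-effect means produced by one cycle, as a function of the input means
    (μα : (Fin n → Fin r → ℝ) → Fin n → Fin r → ℝ)
    (hμα : ∀ (m : Fin n → Fin r → ℝ) (i : Fin n),
      μα m i = (D⁻¹ + (1 / σ2) • ((X i)ᵀ * X i))⁻¹ *ᵥ
        ((1 / σ2) • ((X i)ᵀ *ᵥ y i) +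
          (D⁻¹ * (1 - W i) - (1 / σ2) • ((X i)ᵀ * X i * W i)) *ᵥ μβ m)) :
    (∀ i, D⁻¹ * (1 - W i) - (1 / σ2) • ((X i)ᵀ * X i * W i) = 0) ∧
    (∀ m : Fin n → Fin r → ℝ,
      μβ m = M⁻¹ *ᵥ ∑ i, (1 / σ2) • ((W i)ᵀ *ᵥ ((X i)ᵀ *ᵥ y i))) ∧
    (∀ (m : Fin n → Fin r → ℝ) (i : Fin n),
      μα m i = (D⁻¹ + (1 / σ2) • ((X i)ᵀ * X i))⁻¹ *ᵥ ((1 / σ2) • ((X i)ᵀ *ᵥ y i))) ∧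
    (∀ m : Fin n → Fin r → ℝ, μα (μα m) = μα m ∧ μβ (μα m) = μβ m) := by
  have key : ∀ i, D⁻¹ * (1 - W i) - (1 / σ2) • ((X i)ᵀ * X i * W i) = 0 := by
    intro i
    set A : Matrix (Fin r) (Fin r) ℝ := (1 / σ2) • ((X i)ᵀ * X i) + D⁻¹ with hA
    have hDinv : (D⁻¹).PosDef := hD.inv
    have hXT : ((X i)ᵀ * X i).PosSemidef := by
      simpa using Matrix.posSemidef_conjTranspose_mul_self (X i)
    have hsm : ((1 / σ2) • ((X i)ᵀ * X i)).PosSemidef := by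
      refine ⟨?_, fun x => ?_⟩
      · rw [Matrix.IsHermitian, Matrix.conjTranspose_smul]
        simp [hXT.1.eq]
      · exact (hXT.smul (show (0:ℝ) ≤ 1 / σ2 by positivity)).2 x
    have hApd : A.PosDef := Matrix.PosDef.posSemidef_add hsm hDinv
    have hAu : IsUnit A.det := (Matrix.isUnit_iff_isUnit_det A).mp hApd.isUnit
    have hAinv : A * A⁻¹ = 1 := Matrix.mul_nonsing_inv A hAu
    have hW' : W i = A⁻¹ * D⁻¹ := hW i
    have hkey : D⁻¹ * (1 - W i) - (1 / σ2) • ((X i)ᵀ * X i * W i)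
        = D⁻¹ - A * W i := by
      rw [hA, Matrix.mul_sub, Matrix.mul_one, Matrix.add_mul, smul_mul_assoc,
        Matrix.mul_assoc]
      abel
    rw [hkey, hW', ← Matrix.mul_assoc, hAinv, Matrix.one_mul, sub_self]
  have hβ : ∀ m : Fin n → Fin r → ℝ,
      μβ m = M⁻¹ *ᵥ ∑ i, (1 / σ2) • ((W i)ᵀ *ᵥ ((X i)ᵀ *ᵥ y i)) := by
    intro m
    rw [hμβ m]
    refine congrArg (M⁻¹ *ᵥ ·) (Finset.sum_congr rfl fun i _ => ?_)
    rw [key i]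
    simp
  have hα : ∀ (m : Fin n → Fin r → ℝ) (i : Fin n),
      μα m i = (D⁻¹ + (1 / σ2) • ((X i)ᵀ * X i))⁻¹ *ᵥ ((1 / σ2) • ((X i)ᵀ *ᵥ y i)) := by
    intro m i
    rw [hμα m i, key i]
    simp
  refine ⟨key, hβ, hα, fun m => ⟨?_, ?_⟩⟩
  · funext i j
    rw [hα (μα m) i, hα m i]
  · rw [hβ (μα m), hβ m]
end

section
/- Let (α, 𝒜, μ) be a measure space with μ σ-finite, let t : α → ℝ^k be measurable, and let λ₀ ∈ ℝ^k be such that there is an open neighborhood U of λ₀ with ∫ exp(⟨λ, t(x)⟩) dμ(x) < ∞ for all λ ∈ U. Define h : U → ℝ by h(λ) = log ∫ exp(⟨λ, t(x)⟩) dμ(x). Then h is differentiable at λ₀, each component t_i is integrable with respect to the tilted density w(x) = exp(⟨λ₀, t(x)⟩ − h(λ₀)), and the gradient satisfies ∇h(λ₀)_i = ∫ t_i(x) · exp(⟨λ₀, t(x)⟩ − h(λ₀)) dμ(x) for i = 1,…,k; that is, ∇h(λ₀) equals the mean of the sufficient statistic t under the exponential-family density x ↦ exp(⟨λ₀, t(x)⟩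 − h(λ₀)) with respect to μ. -/
open MeasureTheory Matrix
open Finset

/-- The continuous linear map `x ↦ x ⬝ᵥ c`. -/
noncomputable def dotCLM {k : ℕ} (c : Fin k → ℝ) : (Fin k → ℝ) →L[ℝ] ℝ :=
  ∑ i, c i • ContinuousLinearMap.proj i

lemma dotCLM_apply {k : ℕ} (c x : Fin k → ℝ) : dotCLM c x = x ⬝ᵥ c := by
  simp [dotCLM, dotProduct, mul_comm, ContinuousLinearMap.sum_apply]

lemma dotCLM_continuous {k : ℕ} : Continuous fun c : Fin k → ℝ => dotCLM c := by
  unfold dotCLM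
  exact continuous_finset_sum _ fun i _ => (continuous_apply i).smul continuous_const

lemma dotCLM_norm_le {k : ℕ} (c : Fin k → ℝ) : ‖dotCLM c‖ ≤ ∑ i, |c i| := by
  refine ContinuousLinearMap.opNorm_le_bound _ (Finset.sum_nonneg fun i _ => abs_nonneg _) ?_
  intro x
  rw [dotCLM_apply]
  calc ‖x ⬝ᵥ c‖ ≤ ∑ i, ‖x i * c i‖ := norm_sum_le _ _
    _ ≤ ∑ i, |c i| * ‖x‖ := by
        refine Finset.sum_le_sum fun i _ => ?_
        rw [Real.norm_eq_abs, abs_mul, mul_comm]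
        exact mul_le_mul_of_nonneg_left (norm_le_pi_norm x i) (abs_nonneg _)
    _ = (∑ i, |c i|) * ‖x‖ := (Finset.sum_mul ..).symm

lemma dotCLM_single {k : ℕ} (c : Fin k → ℝ) (i : Fin k) : dotCLM c (Pi.single i 1) = c i := by
  rw [dotCLM_apply]
  simp [dotProduct, Pi.single_apply]

lemma hasFDerivAt_exp_dot {k : ℕ} (c x : Fin k → ℝ) :
    HasFDerivAt (fun x : Fin k → ℝ => Real.exp (x ⬝ᵥ c)) (Real.exp (x ⬝ᵥ c) • dotCLM c) x := by
  have h1 : HasFDerivAt (fun x : Fin k → ℝ => x ⬝ᵥ c) (dotCLM c) x := by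
    have : (fun x : Fin k → ℝ => x ⬝ᵥ c) = fun x => dotCLM c x := by
      funext y; rw [dotCLM_apply]
    rw [this]
    exact (dotCLM c).hasFDerivAt
  exact h1.exp

/-- signed perturbation vector -/
noncomputable def pertVec {k : ℕ} (δ : ℝ) (T : Finset (Fin k)) : Fin k → ℝ :=
  fun j => if j ∈ T then 2 * δ else -(2 * δ)

lemma pertVec_dot {k : ℕ} (δ : ℝ) (T : Finset (Fin k)) (c : Fin k → ℝ) :
    pertVec δ T ⬝ᵥ c = (∑ j ∈ T, 2 * δ * c j) + ∑ j ∈ (univ : Finset (Fin k)) \ T, -(2 * δ) * c j := by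
  rw [dotProduct, ← Finset.sum_sdiff (Finset.subset_univ T), add_comm]
  congr 1
  · exact Finset.sum_congr rfl fun j hj => by simp [pertVec, hj]
  · refine Finset.sum_congr rfl fun j hj => ?_
    simp only [Finset.mem_sdiff] at hj
    simp [pertVec, hj.2]

lemma key_bound {k : ℕ} {δ : ℝ} (hδ : 0 < δ) (l₀ x c : Fin k → ℝ)
    (hx : ∀ j, |x j - l₀ j| ≤ δ) :
    (∑ j, |c j|) * Real.exp (x ⬝ᵥ c) ≤
      δ⁻¹ * ∑ T ∈ (univ : Finset (Fin k)).powerset,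
        Real.exp ((l₀ + pertVec δ T) ⬝ᵥ c) := by
  set S : ℝ := ∑ j, |c j| with hS
  have hS0 : 0 ≤ S := Finset.sum_nonneg fun j _ => abs_nonneg _
  -- x ⬝ᵥ c ≤ l₀ ⬝ᵥ c + δ * S
  have h1 : x ⬝ᵥ c ≤ l₀ ⬝ᵥ c + δ * S := by
    have : x ⬝ᵥ c - l₀ ⬝ᵥ c ≤ δ * S := by
      rw [← sub_dotProduct]
      calc (x - l₀) ⬝ᵥ c ≤ ∑ j, |(x j - l₀ j) * c j| :=
            Finset.sum_le_sum fun j _ => le_abs_self _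
        _ ≤ ∑ j, δ * |c j| := by
            refine Finset.sum_le_sum fun j _ => ?_
            rw [abs_mul]
            exact mul_le_mul_of_nonneg_right (hx j) (abs_nonneg _)
        _ = δ * S := by rw [hS, Finset.mul_sum]
    linarith
  -- S ≤ exp (δ * S) / δ
  have h2 : S ≤ Real.exp (δ * S) / δ := by
    rw [le_div_iff₀ hδ, mul_comm]
    calc δ * S ≤ Real.exp (δ * S) - 1 := by
          have := Real.add_one_le_exp (δ * S); linarith
      _ ≤ Real.exp (δ * S) := by linarith
  have h3 : S * Real.exp (x ⬝ᵥ c) ≤ δ⁻¹ * Real.exp (l₀ ⬝ᵥ c + 2 * δ * S) := by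
    calc S * Real.exp (x ⬝ᵥ c) ≤ (Real.exp (δ * S) / δ) * Real.exp (l₀ ⬝ᵥ c + δ * S) :=
          mul_le_mul h2 (Real.exp_le_exp.2 h1) (Real.exp_pos _).le
            (div_nonneg (Real.exp_pos _).le hδ.le)
      _ = δ⁻¹ * Real.exp (l₀ ⬝ᵥ c + 2 * δ * S) := by
          rw [div_mul_eq_mul_div, div_eq_inv_mul, mul_assoc, ← Real.exp_add]
          ring_nf
  refine h3.trans ?_
  refine mul_le_mul_of_nonneg_left ?_ (inv_nonneg.2 hδ.le)
  -- exp (l₀ ⬝ᵥ c + 2δ S) ≤ ∑_T exp ((l₀ + pertVec δ T) ⬝ᵥ c)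
  have h4 : Real.exp (l₀ ⬝ᵥ c + 2 * δ * S) =
      Real.exp (l₀ ⬝ᵥ c) * ∏ j, Real.exp (2 * δ * |c j|) := by
    rw [← Real.exp_sum, ← Real.exp_add, hS, Finset.mul_sum]
  rw [h4]
  have h5 : (∏ j, Real.exp (2 * δ * |c j|)) ≤
      ∏ j, (Real.exp (2 * δ * c j) + Real.exp (-(2 * δ) * c j)) := by
    refine Finset.prod_le_prod (fun j _ => (Real.exp_pos _).le) fun j _ => ?_
    rcases abs_cases (c j) with ⟨he, _⟩ | ⟨he, _⟩
    · rw [he]; nlinarith [Real.exp_pos (-(2 * δ) * c j)]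
    · rw [he]
      have : 2 * δ * -c j = -(2*δ) * c j := by ring
      rw [this]
      nlinarith [Real.exp_pos (2 * δ * c j)]
  calc Real.exp (l₀ ⬝ᵥ c) * ∏ j, Real.exp (2 * δ * |c j|)
      ≤ Real.exp (l₀ ⬝ᵥ c) * ∏ j, (Real.exp (2 * δ * c j) + Real.exp (-(2 * δ) * c j)) :=
        mul_le_mul_of_nonneg_left h5 (Real.exp_pos _).le
    _ = ∑ T ∈ (univ : Finset (Fin k)).powerset, Real.exp ((l₀ + pertVec δ T) ⬝ᵥ c) := by
        rw [Finset.prod_add, Finset.mul_sum]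
        refine Finset.sum_congr rfl fun T _ => ?_
        rw [add_dotProduct, Real.exp_add, pertVec_dot, Real.exp_add,
          ← Real.exp_sum, ← Real.exp_sum]

/-- **Mean of the sufficient statistic is the gradient of the log-normalizer.**
If `h(λ) = log ∫ exp(⟨λ, t(x)⟩) dμ(x)` is finite on an open neighborhood `U` of `λ₀`,
then `h` is differentiable at `λ₀`, each `t_i` is integrable w.r.t. the tilted density
`exp(⟨λ₀, t(x)⟩ - h(λ₀))`, and `∇h(λ₀)_i = ∫ t_i(x) exp(⟨λ₀, t(x)⟩ - h(λ₀)) dμ(x)`. -/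
theorem logNormalizer_gradient {α : Type*} [MeasurableSpace α] (μ : Measure α)
    [SigmaFinite μ] {k : ℕ} (t : α → Fin k → ℝ) (ht : Measurable t)
    (U : Set (Fin k → ℝ)) (hU : IsOpen U) (l₀ : Fin k → ℝ) (hl₀ : l₀ ∈ U)
    (hint : ∀ l ∈ U, Integrable (fun x => Real.exp (l ⬝ᵥ t x)) μ)
    (h : (Fin k → ℝ) → ℝ)
    (hh : ∀ l ∈ U, h l = Real.log (∫ x, Real.exp (l ⬝ᵥ t x) ∂μ)) :
    DifferentiableAt ℝ h l₀ ∧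
    (∀ i, Integrable (fun x => t x i * Real.exp (l₀ ⬝ᵥ t x - h l₀)) μ) ∧
    (∀ i, fderiv ℝ h l₀ (Pi.single i 1) =
      ∫ x, t x i * Real.exp (l₀ ⬝ᵥ t x - h l₀) ∂μ) := by
  classical
  by_cases hμ : μ = 0
  · subst hμ
    have hh0 : h =ᶠ[nhds l₀] fun _ => (0:ℝ) := by
      filter_upwards [hU.mem_nhds hl₀] with l hl
      rw [hh l hl, integral_zero_measure, Real.log_zero]
    refine ⟨(differentiableAt_const (0:ℝ)).congr_of_eventuallyEq hh0,
      fun i => integrable_zero_measure, fun i => ?_⟩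
    rw [hh0.fderiv_eq]
    simp
  obtain ⟨ε, εpos, hball⟩ := Metric.isOpen_iff.1 hU l₀ hl₀
  set δ := ε / 3 with hδdef
  have hδ : 0 < δ := by positivity
  have hmem : ∀ T : Finset (Fin k), l₀ + pertVec δ T ∈ U := by
    intro T
    apply hball
    rw [Metric.mem_ball, dist_eq_norm, add_sub_cancel_left]
    have h2δ : ‖pertVec δ T‖ ≤ 2 * δ := by
      refine (pi_norm_le_iff_of_nonneg (by positivity)).2 fun j => ?_
      simp only [pertVec, Real.norm_eq_abs]
      split
      · rw [abs_of_nonneg (by positivity)]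
      · rw [abs_neg, abs_of_nonneg (by positivity)]
    have : (2:ℝ) * δ < ε := by rw [hδdef]; linarith
    exact lt_of_le_of_lt h2δ this
  set bound : α → ℝ := fun a => δ⁻¹ * ∑ T ∈ (Finset.univ : Finset (Fin k)).powerset,
      Real.exp ((l₀ + pertVec δ T) ⬝ᵥ t a) with hbound
  have hbound_int : Integrable bound μ :=
    (integrable_finset_sum _ fun T _ => hint _ (hmem T)).const_mul _
  have hmeas : ∀ l : Fin k → ℝ, Measurable fun a => Real.exp (l ⬝ᵥ t a) := by
    intro l
    apply Real.measurable_exp.comp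
    show Measurable fun a => ∑ i, l i * t a i
    exact Finset.measurable_sum _ fun i _ =>
      measurable_const.mul ((measurable_pi_apply i).comp ht)
  -- pointwise bound
  have hptw : ∀ a : α, ∀ x ∈ Metric.ball l₀ δ,
      (∑ j, |t a j|) * Real.exp (x ⬝ᵥ t a) ≤ bound a := by
    intro a x hx
    refine key_bound hδ l₀ x (t a) fun j => ?_
    have := norm_le_pi_norm (x - l₀) j
    rw [Metric.mem_ball, dist_eq_norm] at hx
    simpa using this.trans hx.le
  have hF'norm : ∀ a : α, ∀ x ∈ Metric.ball l₀ δ,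
      ‖Real.exp (x ⬝ᵥ t a) • dotCLM (t a)‖ ≤ bound a := by
    intro a x hx
    rw [norm_smul (Real.exp (x ⬝ᵥ t a)) (dotCLM (t a)), Real.norm_eq_abs, Real.abs_exp]
    calc Real.exp (x ⬝ᵥ t a) * ‖dotCLM (t a)‖
        ≤ Real.exp (x ⬝ᵥ t a) * ∑ j, |t a j| :=
          mul_le_mul_of_nonneg_left (dotCLM_norm_le _) (Real.exp_pos _).le
      _ = (∑ j, |t a j|) * Real.exp (x ⬝ᵥ t a) := mul_comm _ _
      _ ≤ bound a := hptw a x hx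
  have hF'meas : AEStronglyMeasurable (fun a => Real.exp (l₀ ⬝ᵥ t a) • dotCLM (t a)) μ := by
    have hg : Continuous fun c : Fin k → ℝ => Real.exp (l₀ ⬝ᵥ c) • dotCLM c := by
      refine Continuous.fun_smul ?_ dotCLM_continuous
      refine Real.continuous_exp.comp ?_
      show Continuous fun c : Fin k → ℝ => ∑ i, l₀ i * c i
      exact continuous_finset_sum _ fun i _ => continuous_const.mul (continuous_apply i)
    exact (hg.comp_stronglyMeasurable ht.stronglyMeasurable).aestronglyMeasurable
  have hZderiv : HasFDerivAt (fun l : Fin k → ℝ => ∫ a, Real.exp (l ⬝ᵥ t a) ∂μ)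
      (∫ a, Real.exp (l₀ ⬝ᵥ t a) • dotCLM (t a) ∂μ) l₀ := by
    apply hasFDerivAt_integral_of_dominated_of_fderiv_le
      (F' := fun l a => Real.exp (l ⬝ᵥ t a) • dotCLM (t a)) (bound := bound) (Metric.ball_mem_nhds l₀ hδ)
    · exact Filter.Eventually.of_forall fun x => (hmeas x).aestronglyMeasurable
    · exact hint l₀ hl₀
    · exact hF'meas
    · exact Filter.Eventually.of_forall fun a x hx => hF'norm a x hx
    · exact hbound_int
    · exact Filter.Eventually.of_forall fun a x _ => hasFDerivAt_exp_dot (t a) x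
  have hZpos : 0 < ∫ a, Real.exp (l₀ ⬝ᵥ t a) ∂μ := by
    rw [integral_pos_iff_support_of_nonneg (fun a => (Real.exp_pos _).le) (hint l₀ hl₀)]
    have hs : Function.support (fun a => Real.exp (l₀ ⬝ᵥ t a)) = Set.univ :=
      Set.eq_univ_iff_forall.2 fun a => (Real.exp_pos _).ne'
    rw [hs]
    exact Measure.measure_univ_pos.2 hμ
  have hev : h =ᶠ[nhds l₀] fun l => Real.log (∫ a, Real.exp (l ⬝ᵥ t a) ∂μ) := by
    filter_upwards [hU.mem_nhds hl₀] with l hl using hh l hl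
  have hderiv : HasFDerivAt h
      ((∫ a, Real.exp (l₀ ⬝ᵥ t a) ∂μ)⁻¹ • ∫ a, Real.exp (l₀ ⬝ᵥ t a) • dotCLM (t a) ∂μ) l₀ :=
    (hZderiv.log hZpos.ne').congr_of_eventuallyEq hev
  have hF'int : Integrable (fun a => Real.exp (l₀ ⬝ᵥ t a) • dotCLM (t a)) μ := by
    refine Integrable.mono' hbound_int hF'meas ?_
    exact Filter.Eventually.of_forall fun a => hF'norm a l₀ (Metric.mem_ball_self hδ)
  have hti : ∀ i, Integrable (fun a => t a i * Real.exp (l₀ ⬝ᵥ t a)) μ := by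
    intro i
    refine Integrable.mono' hbound_int
      (((measurable_pi_apply i).comp ht).mul (hmeas l₀)).aestronglyMeasurable ?_
    refine Filter.Eventually.of_forall fun a => ?_
    calc ‖t a i * Real.exp (l₀ ⬝ᵥ t a)‖ = |t a i| * Real.exp (l₀ ⬝ᵥ t a) := by
          rw [Real.norm_eq_abs, abs_mul, Real.abs_exp]
      _ ≤ (∑ j, |t a j|) * Real.exp (l₀ ⬝ᵥ t a) :=
          mul_le_mul_of_nonneg_right
            (Finset.single_le_sum (fun j _ => abs_nonneg (t a j)) (Finset.mem_univ i))
            (Real.exp_pos _).le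
      _ ≤ bound a := hptw a l₀ (Metric.mem_ball_self hδ)
  have htilt : ∀ i, (fun a => t a i * Real.exp (l₀ ⬝ᵥ t a - h l₀)) =
      fun a => (t a i * Real.exp (l₀ ⬝ᵥ t a)) * Real.exp (-(h l₀)) := by
    intro i
    funext a
    rw [Real.exp_sub, Real.exp_neg]
    field_simp
  have hexph : Real.exp (-(h l₀)) = (∫ a, Real.exp (l₀ ⬝ᵥ t a) ∂μ)⁻¹ := by
    rw [Real.exp_neg, hh l₀ hl₀, Real.exp_log hZpos]
  refine ⟨hderiv.differentiableAt, fun i => ?_, fun i => ?_⟩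
  · rw [htilt i]
    exact (hti i).mul_const _
  · rw [hderiv.fderiv, htilt i, ContinuousLinearMap.smul_apply,
      ContinuousLinearMap.integral_apply hF'int]
    simp only [ContinuousLinearMap.smul_apply, dotCLM_single, smul_eq_mul]
    rw [integral_mul_const, hexph, mul_comm]
    congr 1
    exact integral_congr_ae (Filter.Eventually.of_forall fun a => mul_comm _ _)
end

section
/- Let U ⊆ ℝ^k be open, let h : U → ℝ be differentiable on U and twice differentiable at a point λ₀ ∈ U, and let H denote the Hessian matrix of h at λ₀. Let c_1,…,c_m ∈ ℝ^k be fixed vectors and define L : U → ℝ by L(λ) = ∑_{a=1}^m ⟨c_a, ∇h(λ)⟩ − (⟨λ, ∇h(λ)⟩ − h(λ)). Then L is differentiable at λ₀ with ∇L(λ₀) = H·(∑_{a=1}^m c_a − λ₀); in particular, if H is invertible, then ∇L(λ₀) = 0 if and only if λ₀ = ∑_{a=1}^m c_a. -/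
open Matrix

/-- **Stationarity of the variational lower bound at the VMP update.**
If `h` is differentiable on an open set `U ∋ λ₀`, twice differentiable at `λ₀` with
Hessian matrix `H`, and `L(λ) = ∑_a ⟨c_a, ∇h(λ)⟩ - (⟨λ, ∇h(λ)⟩ - h(λ))` (written via
directional derivatives `⟨c, ∇h(λ)⟩ = Dh(λ)[c]`), then `L` is differentiable at `λ₀`
with gradient `H·(∑_a c_a - λ₀)`; in particular, if `H` is invertible, the gradient
vanishes iff `λ₀ = ∑_a c_a`. -/
theorem lower_bound_stationary_at_vmp_update {k m : ℕ} (U : Set (Fin k → ℝ))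
    (hU : IsOpen U) (h : (Fin k → ℝ) → ℝ) (l₀ : Fin k → ℝ) (hl₀ : l₀ ∈ U)
    (hdiff : ∀ l ∈ U, DifferentiableAt ℝ h l)
    (hdiff2 : DifferentiableAt ℝ (fderiv ℝ h) l₀)
    (H : Matrix (Fin k) (Fin k) ℝ)
    (hH : ∀ i j, H i j = fderiv ℝ (fderiv ℝ h) l₀ (Pi.single i 1) (Pi.single j 1))
    (c : Fin m → Fin k → ℝ)
    (L : (Fin k → ℝ) → ℝ)
    (hL : ∀ l, L l = (∑ a, fderiv ℝ h l (c a)) - (fderiv ℝ h l l - h l)) :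
    DifferentiableAt ℝ L l₀ ∧
    (∀ i, fderiv ℝ L l₀ (Pi.single i 1) = (H *ᵥ ((∑ a, c a) - l₀)) i) ∧
    (IsUnit H →
      ((∀ i, fderiv ℝ L l₀ (Pi.single i 1) = 0) ↔ l₀ = ∑ a, c a)) := by
  have hLf : L = fun l => (∑ a, fderiv ℝ h l (c a)) - (fderiv ℝ h l l - h l) :=
    funext hL
  set B := fderiv ℝ (fderiv ℝ h) l₀ with hBdef
  have hB : HasFDerivAt (fderiv ℝ h) B l₀ := hdiff2.hasFDerivAt
  have hh : HasFDerivAt h (fderiv ℝ h l₀) l₀ := (hdiff l₀ hl₀).hasFDerivAt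
  -- each summand
  have hterm : ∀ a : Fin m,
      HasFDerivAt (fun l => fderiv ℝ h l (c a))
        ((fderiv ℝ h l₀).comp (0 : (Fin k → ℝ) →L[ℝ] (Fin k → ℝ)) + B.flip (c a)) l₀ :=
    fun a => hB.clm_apply (hasFDerivAt_const (c a) l₀)
  have hsum : HasFDerivAt (fun l => ∑ a, fderiv ℝ h l (c a))
      (∑ a, ((fderiv ℝ h l₀).comp (0 : (Fin k → ℝ) →L[ℝ] (Fin k → ℝ)) + B.flip (c a))) l₀ :=
    HasFDerivAt.fun_sum (fun a _ => hterm a)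
  have hquad : HasFDerivAt (fun l => fderiv ℝ h l l)
      ((fderiv ℝ h l₀).comp (ContinuousLinearMap.id ℝ (Fin k → ℝ)) + B.flip l₀) l₀ :=
    hB.clm_apply (hasFDerivAt_id l₀)
  have hLder : HasFDerivAt L
      ((∑ a, ((fderiv ℝ h l₀).comp (0 : (Fin k → ℝ) →L[ℝ] (Fin k → ℝ)) + B.flip (c a))) -
       (((fderiv ℝ h l₀).comp (ContinuousLinearMap.id ℝ (Fin k → ℝ)) + B.flip l₀) -
         fderiv ℝ h l₀)) l₀ := by
    rw [hLf]
    exact hsum.sub (hquad.sub hh)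
  have hfd := hLder.fderiv
  have key : ∀ v, fderiv ℝ L l₀ v = B v ((∑ a, c a) - l₀) := by
    intro v
    rw [hfd]
    simp [ContinuousLinearMap.sum_apply, map_sum, map_sub]
  -- evaluate B v w = sum over basis
  have hBeval : ∀ i, B (Pi.single i 1) ((∑ a, c a) - l₀) =
      (H *ᵥ ((∑ a, c a) - l₀)) i := by
    intro i
    set w := (∑ a, c a) - l₀ with hw
    have hw2 : w = ∑ j, (w j) • (Pi.single j 1 : Fin k → ℝ) := by
      rw [← Finset.univ_sum_single w]
      refine Finset.sum_congr rfl fun j _ => ?_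
      funext x
      rcases eq_or_ne j x with rfl | hx
      · simp
      · simp [Pi.single_eq_of_ne' hx]
    calc B (Pi.single i 1) w = B (Pi.single i 1) (∑ j, (w j) • (Pi.single j 1 : Fin k → ℝ)) := by
          rw [← hw2]
      _ = ∑ j, w j * B (Pi.single i 1) (Pi.single j 1) := by
          rw [map_sum]; simp [smul_eq_mul]
      _ = (H *ᵥ w) i := by
          simp [Matrix.mulVec, dotProduct, hH, mul_comm]
  refine ⟨hLder.differentiableAt, fun i => (key _).trans (hBeval i), fun hunit => ?_⟩
  obtain ⟨Hinv, hHinv⟩ := isUnit_iff_exists.mp hunit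
  constructor
  · intro h0
    have hvec : H *ᵥ ((∑ a, c a) - l₀) = 0 := by
      funext i
      have := h0 i
      rw [key, hBeval] at this
      exact this
    have : (∑ a, c a) - l₀ = 0 := by
      have := congrArg (fun v => Hinv *ᵥ v) hvec
      simpa [Matrix.mulVec_mulVec, hHinv.2] using this
    have := sub_eq_zero.mp this
    exact this.symm
  · intro hval i
    rw [key, hBeval, hval]
    simp
end

section
/- Fix n ≥ 1, and for i = 1,…,n fix y_i ∈ ℝ^{n_i} and a real n_i×r matrix X_i; let σ² > 0 and let D be a symmetric positive definite r×r matrix. Set W_i := ((1/σ²)·X_iᵀX_i + D^{−1})^{−1} D^{−1} for each i, and define f : ℝ^r × (ℝ^r)^n → ℝ by f(β, α̃_1,…,α̃_n) = ∑_{i=1}^n [ (1/(2σ²))·‖y_i − X_iW_iβ − X_iα̃_i‖² + (1/2)·(α̃_i − (I − W_i)β)ᵀ D^{−1} (α̃_i − (I − W_i)β) ]. Then f separates additively in β and the α̃_i: there exist functions g : ℝ^r → ℝ and h_1,…,h_n : ℝ^r → ℝ such that f(β, α̃_1,…,α̃_n) = g(β) + ∑_{i=1}^n h_i(α̃_i)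 for all β ∈ ℝ^r and all α̃_1,…,α̃_n ∈ ℝ^r. -/
open Matrix

private lemma smul_posSemidef' {m : ℕ} {c : ℝ} (hc : 0 ≤ c)
    {A : Matrix (Fin m) (Fin m) ℝ} (hA : A.PosSemidef) : (c • A).PosSemidef := by
  refine ⟨?_, fun x => ?_⟩
  · unfold Matrix.IsHermitian
    rw [conjTranspose_smul, hA.1]
    simp
  · exact (hA.smul hc).2 x

private lemma mulVec_dot' {m k : ℕ} (A : Matrix (Fin m) (Fin k) ℝ)
    (u : Fin k → ℝ) (w : Fin m → ℝ) : (A *ᵥ u) ⬝ᵥ w = u ⬝ᵥ (Aᵀ *ᵥ w) := by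
  rw [dotProduct_comm, dotProduct_mulVec, ← mulVec_transpose, dotProduct_comm]

/-- **Exact factorization of the partially noncentered posterior.**
With the optimal tuning matrices `W_i = ((1/σ²) X_iᵀX_i + D⁻¹)⁻¹ D⁻¹`, the negative
log unnormalized posterior
`f(β, α̃) = ∑_i [(1/(2σ²))‖y_i - X_iW_iβ - X_iα̃_i‖² +
              (1/2)(α̃_i - (I-W_i)β)ᵀ D⁻¹ (α̃_i - (I-W_i)β)]`
separates additively in `β` and the `α̃_i`'s:
`f(β, α̃₁,…,α̃_n) = g(β) + ∑_i h_i(α̃_i)`. -/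
theorem posterior_separates_in_pnc_parametrization
    {n r : ℕ} (ni : Fin n → ℕ) (hn : 1 ≤ n)
    (y : (i : Fin n) → Fin (ni i) → ℝ)
    (X : (i : Fin n) → Matrix (Fin (ni i)) (Fin r) ℝ)
    (σ2 : ℝ) (hσ2 : 0 < σ2)
    (D : Matrix (Fin r) (Fin r) ℝ) (hD : D.PosDef)
    (W : Fin n → Matrix (Fin r) (Fin r) ℝ)
    (hW : ∀ i, W i = ((1 / σ2) • ((X i)ᵀ * X i) + D⁻¹)⁻¹ * D⁻¹)
    (f : (Fin r → ℝ) → (Fin n → Fin r → ℝ) → ℝ)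
    (hf : ∀ (β : Fin r → ℝ) (α : Fin n → Fin r → ℝ),
      f β α = ∑ i,
        ((1 / (2 * σ2)) *
            ((y i - (X i * W i) *ᵥ β - X i *ᵥ α i) ⬝ᵥ (y i - (X i * W i) *ᵥ β - X i *ᵥ α i))
          + (1 / 2) *
            ((α i - (1 - W i) *ᵥ β) ⬝ᵥ (D⁻¹ *ᵥ (α i - (1 - W i) *ᵥ β))))) :
    ∃ (g : (Fin r → ℝ) → ℝ) (h : Fin n → (Fin r → ℝ) → ℝ),
      ∀ (β : Fin r → ℝ) (α : Fin n → Fin r → ℝ),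
        f β α = g β + ∑ i, h i (α i) := by
  have hDsym : Dᵀ = D := by
    rw [← conjTranspose_eq_transpose_of_trivial]; exact hD.1
  have hEpd : (D⁻¹).PosDef := hD.inv
  have hEsym : (D⁻¹)ᵀ = D⁻¹ := by
    rw [Matrix.transpose_nonsing_inv, hDsym]
  set M : Fin n → Matrix (Fin r) (Fin r) ℝ :=
    fun i => (1 / σ2) • ((X i)ᵀ * X i) + D⁻¹ with hM
  have hMpd : ∀ i, (M i).PosDef := fun i =>
    Matrix.PosDef.posSemidef_add
      (smul_posSemidef' (by positivity) (Matrix.posSemidef_conjTranspose_mul_self (X i)))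
      hEpd
  have hMsym : ∀ i, (M i)ᵀ = M i := fun i => by
    simp only [hM, transpose_add, transpose_smul, transpose_mul, transpose_transpose, hEsym]
  have hWtrans : ∀ i, (W i)ᵀ = D⁻¹ * (M i)⁻¹ := fun i => by
    have h1 : ((M i)⁻¹)ᵀ = ((M i)ᵀ)⁻¹ := Matrix.transpose_nonsing_inv _
    rw [hW i]
    show ((M i)⁻¹ * D⁻¹)ᵀ = _
    rw [transpose_mul, hEsym, h1, hMsym]
  have hkey : ∀ i, (W i)ᵀ * M i = D⁻¹ := fun i => by
    rw [hWtrans i, Matrix.mul_assoc,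
      Matrix.nonsing_inv_mul _ ((Matrix.isUnit_iff_isUnit_det _).mp (hMpd i).isUnit),
      Matrix.mul_one]
  have hmat : ∀ i, (1 / σ2) • ((X i * W i)ᵀ * X i) = (1 - W i)ᵀ * D⁻¹ := by
    intro i
    have hsplit : (1 / σ2) • ((X i)ᵀ * X i) = M i - D⁻¹ := by simp [hM]
    calc (1 / σ2) • ((X i * W i)ᵀ * X i)
        = (W i)ᵀ * ((1 / σ2) • ((X i)ᵀ * X i)) := by
          rw [transpose_mul, Matrix.mul_smul, Matrix.mul_assoc]
      _ = (W i)ᵀ * M i - (W i)ᵀ * D⁻¹ := by rw [hsplit, Matrix.mul_sub]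
      _ = D⁻¹ - (W i)ᵀ * D⁻¹ := by rw [hkey i]
      _ = (1 - W i)ᵀ * D⁻¹ := by
          rw [transpose_sub, transpose_one, Matrix.sub_mul, Matrix.one_mul]
  have hcross : ∀ i (β α : Fin r → ℝ),
      (1 / σ2) * (((X i * W i) *ᵥ β) ⬝ᵥ (X i *ᵥ α)) = ((1 - W i) *ᵥ β) ⬝ᵥ (D⁻¹ *ᵥ α) := by
    intro i β α
    have h1 : ((X i * W i) *ᵥ β) ⬝ᵥ (X i *ᵥ α) = β ⬝ᵥ (((X i * W i)ᵀ * X i) *ᵥ α) := by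
      rw [mulVec_dot' (X i * W i) β (X i *ᵥ α), mulVec_mulVec]
    have h2 : ((1 - W i) *ᵥ β) ⬝ᵥ (D⁻¹ *ᵥ α) = β ⬝ᵥ (((1 - W i)ᵀ * D⁻¹) *ᵥ α) := by
      rw [mulVec_dot' (1 - W i) β (D⁻¹ *ᵥ α), mulVec_mulVec]
    rw [h1, h2, ← hmat i, smul_mulVec, dotProduct_smul, smul_eq_mul]
  have hsymE : ∀ (u v : Fin r → ℝ), u ⬝ᵥ (D⁻¹ *ᵥ v) = v ⬝ᵥ (D⁻¹ *ᵥ u) := by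
    intro u v
    rw [dotProduct_comm, mulVec_dot', hEsym]
  refine ⟨fun β => ∑ i, ((1 / (2 * σ2)) *
      ((y i - (X i * W i) *ᵥ β) ⬝ᵥ (y i - (X i * W i) *ᵥ β))
      + (1 / 2) * (((1 - W i) *ᵥ β) ⬝ᵥ (D⁻¹ *ᵥ ((1 - W i) *ᵥ β)))),
    fun i α => (1 / (2 * σ2)) * ((X i *ᵥ α) ⬝ᵥ (X i *ᵥ α))
      - (1 / σ2) * (y i ⬝ᵥ (X i *ᵥ α)) + (1 / 2) * (α ⬝ᵥ (D⁻¹ *ᵥ α)), ?_⟩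
  intro β α
  rw [hf, ← Finset.sum_add_distrib]
  refine Finset.sum_congr rfl fun i _ => ?_
  set v := y i with hv
  set a := (X i * W i) *ᵥ β with ha
  set x := X i *ᵥ α i with hx
  set b := (1 - W i) *ᵥ β with hb
  have hc : a ⬝ᵥ x = σ2 * (b ⬝ᵥ (D⁻¹ *ᵥ α i)) := by
    have h := hcross i β (α i)
    rw [ha, hx, hb, ← h]
    field_simp
  have e1 : (v - a - x) ⬝ᵥ (v - a - x)
      = (v - a) ⬝ᵥ (v - a) - 2 * (v ⬝ᵥ x) + 2 * (a ⬝ᵥ x) + x ⬝ᵥ x := by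
    simp only [dotProduct_sub, sub_dotProduct, dotProduct_comm x v, dotProduct_comm x a,
      dotProduct_comm a v]
    ring
  have e2 : (α i - b) ⬝ᵥ (D⁻¹ *ᵥ (α i - b))
      = α i ⬝ᵥ (D⁻¹ *ᵥ α i) - 2 * (b ⬝ᵥ (D⁻¹ *ᵥ α i)) + b ⬝ᵥ (D⁻¹ *ᵥ b) := by
    rw [mulVec_sub]
    simp only [dotProduct_sub, sub_dotProduct, hsymE (α i) b]
    ring
  rw [e1, e2, hc]
  field_simp
  ring
end
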